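/- Let G1,…,Gt be vertex-disjoint graphs and let G' be obtained by choosing, for each i, vertices forming a path linking designated vertices across copies as follows: for each i, take k+1 disjoint copies G_i^1,…,G_i^{k+1} of G_i with designated vertices v_i^1,…,v_i^{k+1}, add edges (v_i^ℓ, v_i^{ℓ+1}) for 1 ≤ ℓ ≤ k and (v_i^{k+1}, v_{i+1}^1) for 1 ≤ i ≤ t−1. If X ⊆ V(G') has |X| = k, G'[X] is connected and G'[V(G')\X] is connected, then X contains none of the designated vertices v_i^j and X is entirely contained within a single copy G_i^j. -/
import Mathlib


/-- The composed graph: `k+1` copies of each of the `t` graphs `G i`, where copy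
`(i, ℓ)` is linked through its designated vertex `v i` to the designated vertex of
copy `(i, ℓ+1)`, and copy `(i, k)` (the last copy of `G i`) is linked to copy
`(i+1, 0)`. -/
def composedGraph {V : Type*} {t : ℕ} (G : Fin t → SimpleGraph V) (v : Fin t → V)
    (k : ℕ) : SimpleGraph (Fin t × Fin (k + 1) × V) :=
  SimpleGraph.fromRel (fun x y =>
    (x.1 = y.1 ∧ x.2.1 = y.2.1 ∧ (G x.1).Adj x.2.2 y.2.2) ∨
    (x.1 = y.1 ∧ x.2.2 = v x.1 ∧ y.2.2 = v y.1 ∧ (x.2.1 : ℕ) + 1 = (y.2.1 : ℕ)) ∨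
    ((x.1 : ℕ) + 1 = (y.1 : ℕ) ∧ x.2.1 = Fin.last k ∧ (y.2.1 : ℕ) = 0 ∧
      x.2.2 = v x.1 ∧ y.2.2 = v y.1))

/-- An edge leaving a non-designated vertex stays inside the same copy. -/
lemma composedGraph_adj_copy {V : Type*} {t : ℕ} {G : Fin t → SimpleGraph V}
    {v : Fin t → V} {k : ℕ} {a b : Fin t × Fin (k + 1) × V}
    (h : (composedGraph G v k).Adj a b) (ha : a.2.2 ≠ v a.1) :
    a.1 = b.1 ∧ a.2.1 = b.2.1 := by
  rw [composedGraph, SimpleGraph.fromRel_adj] at h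
  rcases h with ⟨-, h | h⟩
  · rcases h with ⟨h1, h2, -⟩ | ⟨-, h, -⟩ | ⟨-, -, -, h, -⟩
    · exact ⟨h1, h2⟩
    · exact absurd h ha
    · exact absurd h ha
  · rcases h with ⟨h1, h2, -⟩ | ⟨-, -, h, -⟩ | ⟨-, -, -, -, h⟩
    · exact ⟨h1.symm, h2.symm⟩
    · exact absurd h ha
    · exact absurd h ha

/-- Propagate an adjacency-closed property along a walk. -/
lemma walk_prop {W : Type*} {H : SimpleGraph W} {P : W → Prop}
    (hP : ∀ u w, P u → H.Adj u w → P w) :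
    ∀ {a b : W}, H.Walk a b → P a → P b := by
  intro a b p
  induction p with
  | nil => exact id
  | cons h _ ih => exact fun ha => ih (hP _ _ ha h)

/-- Any solution `X` of size `k` in the composed graph avoids all designated vertices
and lies entirely inside a single copy. -/
theorem stmt_9 {V : Type*} [Fintype V] [DecidableEq V] {t : ℕ}
    (G : Fin t → SimpleGraph V) (v : Fin t → V) (k : ℕ) (hk : 1 ≤ k)
    (hconn : ∀ i, (G i).Connected) (hbig : k + 2 ≤ Fintype.card V)
    (X : Finset (Fin t × Fin (k + 1) × V)) (hcard : X.card = k)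
    (h1 : ((composedGraph G v k).induce (X : Set _)).Connected)
    (h2 : ((composedGraph G v k).induce ((Xᶜ : Finset _) : Set _)).Connected) :
    (∀ x ∈ X, x.2.2 ≠ v x.1) ∧
      ∃ i : Fin t, ∃ ℓ : Fin (k + 1), ∀ x ∈ X, x.1 = i ∧ x.2.1 = ℓ := by
  classical
  -- Step 1: no designated vertex lies in X.
  have step1 : ∀ x ∈ X, x.2.2 ≠ v x.1 := by
    intro x hx hxd
    set i := x.1 with hi
    set ℓ := x.2.1 with hℓ
    -- a vertex of copy (i, ℓ) other than the designated one, outside X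
    have hT : ¬ ((Finset.univ.erase (v i)).image (fun w => (i, ℓ, w)) ⊆ X) := by
      intro hsub
      have hc := Finset.card_le_card hsub
      rw [Finset.card_image_of_injective _ (by intro a b hab; simpa using hab),
        Finset.card_erase_of_mem (Finset.mem_univ _), Finset.card_univ, hcard] at hc
      omega
    obtain ⟨a, haT, haX⟩ := Finset.not_subset.mp hT
    obtain ⟨wa, hwa, rfl⟩ := Finset.mem_image.mp haT
    have hwa' : wa ≠ v i := (Finset.mem_erase.mp hwa).1
    -- another copy index ℓ' ≠ ℓ
    obtain ⟨ℓ', hℓ'⟩ := Fintype.exists_ne_of_one_lt_card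
      (by simp only [Fintype.card_fin]; omega : 1 < Fintype.card (Fin (k + 1))) ℓ
    -- a vertex of copy (i, ℓ') outside X
    have hT' : ¬ ((Finset.univ.image (fun w : V => (i, ℓ', w))) ⊆ X) := by
      intro hsub
      have hc := Finset.card_le_card hsub
      rw [Finset.card_image_of_injective _ (by intro a b hab; simpa using hab),
        Finset.card_univ, hcard] at hc
      omega
    obtain ⟨b, hbT, hbX⟩ := Finset.not_subset.mp hT'
    obtain ⟨wb, -, rfl⟩ := Finset.mem_image.mp hbT
    -- both are in the complement
    have haS : ((i, ℓ, wa) : Fin t × Fin (k + 1) × V) ∈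
        (((Xᶜ : Finset _) : Set (Fin t × Fin (k + 1) × V))) := by
      simpa using haX
    have hbS : ((i, ℓ', wb) : Fin t × Fin (k + 1) × V) ∈
        (((Xᶜ : Finset _) : Set (Fin t × Fin (k + 1) × V))) := by
      simpa using hbX
    obtain ⟨p⟩ := h2.preconnected ⟨_, haS⟩ ⟨_, hbS⟩
    have key := walk_prop (H := (composedGraph G v k).induce
        (((Xᶜ : Finset _) : Set (Fin t × Fin (k + 1) × V))))
      (P := fun z => (z : Fin t × Fin (k + 1) × V).1 = i ∧
        (z : Fin t × Fin (k + 1) × V).2.1 = ℓ) ?_ p ⟨rfl, rfl⟩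
    · exact hℓ' key.2
    · rintro ⟨u, hu⟩ ⟨w, hw⟩ ⟨hu1, hu2⟩ hadj
      have hund : u.2.2 ≠ v u.1 := by
        intro hud
        have : u = x := by
          have : u.2.2 = x.2.2 := by rw [hud, hu1, hxd, hi]
          exact Prod.ext hu1 (Prod.ext hu2 this)
        rw [this] at hu
        simp at hu
        exact hu hx
      have := composedGraph_adj_copy (by exact hadj) hund
      exact ⟨this.1 ▸ hu1, this.2 ▸ hu2⟩
  refine ⟨step1, ?_⟩
  -- Step 2: X lies in a single copy.
  have hne : X.Nonempty := Finset.card_pos.mp (by omega)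
  obtain ⟨x₀, hx₀⟩ := hne
  refine ⟨x₀.1, x₀.2.1, fun x hx => ?_⟩
  have hx₀S : x₀ ∈ ((X : Set (Fin t × Fin (k + 1) × V))) := by simpa using hx₀
  have hxS : x ∈ ((X : Set (Fin t × Fin (k + 1) × V))) := by simpa using hx
  obtain ⟨p⟩ := h1.preconnected ⟨x₀, hx₀S⟩ ⟨x, hxS⟩
  exact walk_prop (H := (composedGraph G v k).induce ((X : Set (Fin t × Fin (k + 1) × V))))
    (P := fun z => (z : Fin t × Fin (k + 1) × V).1 = x₀.1 ∧
      (z : Fin t × Fin (k + 1) × V).2.1 = x₀.2.1)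
    (by
      rintro ⟨u, hu⟩ ⟨w, hw⟩ ⟨hu1, hu2⟩ hadj
      have hund : u.2.2 ≠ v u.1 := step1 u (by simpa using hu)
      have := composedGraph_adj_copy (by exact hadj) hund
      exact ⟨this.1 ▸ hu1, this.2 ▸ hu2⟩) p ⟨rfl, rfl⟩
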